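/- Suppose t ↦ (t², t³) parametrizes the cusp C̃ = {y² = x³} ⊆ ℂ² and t ↦ (t², t⁵) parametrizes C = {y² = x⁵} ⊆ ℂ². Then the homeomorphism φ : C → C̃ defined by φ(t², t⁵) = (t², t³) (well-defined since both parametrizations are injective near 0) satisfies: φ is (3/5)-Hölder near 0 but φ is not Lipschitz on any neighborhood of 0 in C. -/
import Mathlib


open Metric

/-- A point of `ℂ²` (with the Euclidean norm) with given coordinates. -/
noncomputable def pt (a b : ℂ) : EuclideanSpace ℂ (Fin 2) :=
  (WithLp.equiv 2 (Fin 2 → ℂ)).symm ![a, b]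

lemma norm_pt (a b : ℂ) : ‖pt a b‖ = Real.sqrt (‖a‖^2 + ‖b‖^2) := by
  simp [pt, EuclideanSpace.norm_eq, Fin.sum_univ_two]

lemma pt_sub (a b c d : ℂ) : pt a b - pt c d = pt (a-c) (b-d) := by
  ext i
  fin_cases i <;> simp [pt]

lemma norm_pt_le (a b : ℂ) : ‖pt a b‖ ≤ ‖a‖ + ‖b‖ := by
  rw [norm_pt]
  rw [show ‖a‖ + ‖b‖ = Real.sqrt ((‖a‖+‖b‖)^2) from (Real.sqrt_sq (by positivity)).symm]
  apply Real.sqrt_le_sqrt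
  nlinarith [norm_nonneg a, norm_nonneg b]

lemma fst_le (a b : ℂ) : ‖a‖ ≤ ‖pt a b‖ := by
  rw [norm_pt, Real.le_sqrt (norm_nonneg a)]
  · nlinarith [norm_nonneg b]
  · positivity

lemma snd_le (a b : ℂ) : ‖b‖ ≤ ‖pt a b‖ := by
  rw [norm_pt, Real.le_sqrt (norm_nonneg b)]
  · nlinarith [norm_nonneg a]
  · positivity

lemma rpow35 (x : ℝ) (hx : 0 ≤ x) : (x^5) ^ ((3:ℝ)/5) = x^3 := by
  rw [← Real.rpow_natCast x 5, ← Real.rpow_mul hx, ← Real.rpow_natCast x 3]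
  norm_num

lemma lb5 (s t : ℂ) (h : ‖t‖ ≤ ‖s‖) (hst : ‖s + t‖ < ‖s‖/10) :
    3 * ‖s‖^5 / 2 ≤ ‖s^5 - t^5‖ := by
  have hs0 : (0:ℝ) ≤ ‖s‖ := norm_nonneg s
  have ht0 : (0:ℝ) ≤ ‖t‖ := norm_nonneg t
  have hq : ‖s^4 - s^3*t + s^2*t^2 - s*t^3 + t^4‖ ≤ 5 * ‖s‖^4 := by
    have A := norm_add_le (s^4 - s^3*t + s^2*t^2 - s*t^3) (t^4)
    have B := norm_sub_le (s^4 - s^3*t + s^2*t^2) (s*t^3)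
    have C := norm_add_le (s^4 - s^3*t) (s^2*t^2)
    have D := norm_sub_le (s^4) (s^3*t)
    simp only [norm_mul, norm_pow] at A B C D
    have e1 : ‖s‖^3*‖t‖ ≤ ‖s‖^4 := by nlinarith [pow_nonneg hs0 3]
    have q2 : ‖t‖^2 ≤ ‖s‖^2 := pow_le_pow_left₀ ht0 h 2
    have q3 : ‖t‖^3 ≤ ‖s‖^3 := pow_le_pow_left₀ ht0 h 3
    have e4 : ‖t‖^4 ≤ ‖s‖^4 := pow_le_pow_left₀ ht0 h 4
    have e2 : ‖s‖^2*‖t‖^2 ≤ ‖s‖^4 := by nlinarith [pow_nonneg hs0 2]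
    have e3 : ‖s‖*‖t‖^3 ≤ ‖s‖^4 := by nlinarith [pow_nonneg hs0 3, pow_nonneg ht0 3]
    linarith
  have hfac : s^5 + t^5 = (s+t) * (s^4 - s^3*t + s^2*t^2 - s*t^3 + t^4) := by ring
  have h1 : ‖s^5 + t^5‖ ≤ ‖s+t‖ * (5*‖s‖^4) := by
    rw [hfac, norm_mul]
    exact mul_le_mul_of_nonneg_left hq (norm_nonneg _)
  have h2 : ‖2*s^5‖ - ‖s^5+t^5‖ ≤ ‖s^5 - t^5‖ := by
    have : s^5 - t^5 = 2*s^5 - (s^5+t^5) := by ring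
    rw [this]
    exact norm_sub_norm_le _ _
  have h3 : ‖2*s^5‖ = 2*‖s‖^5 := by
    rw [norm_mul, norm_pow]; norm_num
  have h4 : ‖s+t‖ * (5*‖s‖^4) ≤ ‖s‖/10 * (5*‖s‖^4) := by
    apply mul_le_mul_of_nonneg_right hst.le
    positivity
  nlinarith [pow_nonneg (norm_nonneg s) 4, pow_nonneg (norm_nonneg s) 5]

lemma core (s t : ℂ) (hs : ‖s‖ ≤ 1) (ht : ‖t‖ ≤ 1) {d : ℝ} (hd1 : d ≤ 1)
    (h2 : ‖s^2 - t^2‖ ≤ d) (h5 : ‖s^5 - t^5‖ ≤ d) :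
    ‖s^2 - t^2‖ + ‖s^3 - t^3‖ ≤ 41 * d ^ ((3:ℝ)/5) := by
  have hd0 : 0 ≤ d := le_trans (norm_nonneg _) h2
  rcases eq_or_lt_of_le hd0 with hd | hd
  · -- d = 0
    have e2 : s^2 = t^2 := by
      have h' : ‖s^2 - t^2‖ ≤ 0 := hd ▸ h2
      rwa [norm_le_zero_iff, sub_eq_zero] at h'
    have e5 : s^5 = t^5 := by
      have h' : ‖s^5 - t^5‖ ≤ 0 := hd ▸ h5
      rwa [norm_le_zero_iff, sub_eq_zero] at h'
    have e3 : s^3 = t^3 := by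
      by_cases h0 : s = 0
      · have ht2 : t^2 = 0 := by rw [← e2, h0]; ring
        have ht0 : t = 0 := by simpa using (pow_eq_zero_iff two_ne_zero).mp ht2
        rw [h0, ht0]
      · have hs2 : s^2 ≠ 0 := pow_ne_zero 2 h0
        have hcalc : s^3 * s^2 = t^3 * s^2 := by
          calc s^3 * s^2 = s^5 := by ring
            _ = t^5 := e5
            _ = t^3 * t^2 := by ring
            _ = t^3 * s^2 := by rw [e2]
        exact mul_right_cancel₀ hs2 hcalc
    rw [e2, e3]
    simp only [sub_self, norm_zero, add_zero]
    exact mul_nonneg (by norm_num) (Real.rpow_nonneg hd0 _)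
  · -- d > 0
    have hdp0 : (0:ℝ) ≤ d ^ ((3:ℝ)/5) := Real.rpow_nonneg hd0 _
    have hdpow : d ≤ d ^ ((3:ℝ)/5) := by
      calc d = d ^ (1:ℝ) := (Real.rpow_one d).symm
        _ ≤ d ^ ((3:ℝ)/5) := Real.rpow_le_rpow_of_exponent_ge hd hd1 (by norm_num)
    set r := max ‖s‖ ‖t‖ with hrdef
    have hsr : ‖s‖ ≤ r := le_max_left _ _
    have htr : ‖t‖ ≤ r := le_max_right _ _
    have hr0 : 0 ≤ r := le_trans (norm_nonneg s) hsr
    have hr1 : r ≤ 1 := max_le hs ht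
    have h22 : ‖s^2 - t^2‖ = ‖s - t‖ * ‖s + t‖ := by
      rw [← norm_mul]; ring_nf
    have h33 : ‖s^3 - t^3‖ ≤ ‖s - t‖ * (3 * r^2) := by
      have hfac : s^3 - t^3 = (s - t) * (s^2 + s*t + t^2) := by ring
      rw [hfac, norm_mul]
      apply mul_le_mul_of_nonneg_left _ (norm_nonneg _)
      have A := norm_add_le (s^2 + s*t) (t^2)
      have B := norm_add_le (s^2) (s*t)
      simp only [norm_mul, norm_pow] at A B
      nlinarith [norm_nonneg s, norm_nonneg t, pow_le_pow_left₀ (norm_nonneg s) hsr 2,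
        pow_le_pow_left₀ (norm_nonneg t) htr 2, mul_le_mul hsr htr (norm_nonneg t) hr0]
    have h33' : ‖s^3 - t^3‖ ≤ 2 * r^3 := by
      calc ‖s^3 - t^3‖ ≤ ‖s^3‖ + ‖t^3‖ := norm_sub_le _ _
        _ ≤ 2 * r^3 := by
          simp only [norm_pow]
          nlinarith [pow_le_pow_left₀ (norm_nonneg s) hsr 3, pow_le_pow_left₀ (norm_nonneg t) htr 3]
    by_cases hc1 : ‖s - t‖ < r/2
    · -- near points
      have hsum : 3*r/2 ≤ ‖s + t‖ := by
        rcases max_cases ‖s‖ ‖t‖ with ⟨he, _⟩ | ⟨he, _⟩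
        · have : s + t = 2*s - (s - t) := by ring
          rw [this]
          have := norm_sub_norm_le (2*s) (s - t)
          have h2s : ‖(2:ℂ)*s‖ = 2*‖s‖ := by rw [norm_mul]; norm_num
          rw [← hrdef] at he
          linarith
        · have heq : s + t = 2*t - (t - s) := by ring
          rw [heq]
          have hn := norm_sub_norm_le (2*t) (t - s)
          have h2t : ‖(2:ℂ)*t‖ = 2*‖t‖ := by rw [norm_mul]; norm_num
          have hrev : ‖t - s‖ = ‖s - t‖ := norm_sub_rev t s
          rw [← hrdef] at he
          linarith
      have key : ‖s - t‖ * (3*r/2) ≤ d := by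
        calc ‖s - t‖ * (3*r/2) ≤ ‖s - t‖ * ‖s + t‖ :=
              mul_le_mul_of_nonneg_left hsum (norm_nonneg _)
          _ = ‖s^2 - t^2‖ := h22.symm
          _ ≤ d := h2
      have h3d : ‖s^3 - t^3‖ ≤ 2*d := by
        have : ‖s - t‖ * (3 * r^2) = 2*r * (‖s - t‖ * (3*r/2)) := by ring
        have hb : ‖s - t‖ * (3 * r^2) ≤ 2*r*d := by
          rw [this]
          apply mul_le_mul_of_nonneg_left key (by linarith)
        nlinarith [norm_nonneg (s^3 - t^3)]
      linarith
    · push_neg at hc1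
      by_cases hc2 : ‖s + t‖ < r/10
      · -- opposite points
        have hlb : 3 * r^5 / 2 ≤ ‖s^5 - t^5‖ := by
          rcases max_cases ‖s‖ ‖t‖ with ⟨he, hle⟩ | ⟨he, hle⟩ <;> rw [← hrdef] at he
          · rw [he]
            exact lb5 s t hle (by rw [← he]; exact hc2)
          · rw [he, norm_sub_rev]
            exact lb5 t s hle.le (by rw [add_comm t s, ← he]; exact hc2)
        have hr5 : r^5 ≤ d := by linarith
        have hr3 : r^3 ≤ d ^ ((3:ℝ)/5) := by
          rw [← rpow35 r hr0]
          exact Real.rpow_le_rpow (by positivity) hr5 (by norm_num)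
        linarith
      · push_neg at hc2
        have hdl : r^2/20 ≤ d := by
          have : r/2 * (r/10) ≤ ‖s - t‖ * ‖s + t‖ :=
            mul_le_mul hc1 hc2 (by linarith) (norm_nonneg _)
          rw [← h22] at this
          linarith
        have hr5 : r^5 ≤ 20*d := by nlinarith [pow_nonneg hr0 2, pow_nonneg hr0 3, pow_le_pow_of_le_one hr0 hr1 (show 2 ≤ 5 by norm_num)]
        have hr3 : r^3 ≤ 20 * d ^ ((3:ℝ)/5) := by
          calc r^3 = (r^5) ^ ((3:ℝ)/5) := (rpow35 r hr0).symm
            _ ≤ (20*d) ^ ((3:ℝ)/5) := Real.rpow_le_rpow (by positivity) hr5 (by norm_num)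
            _ = 20 ^ ((3:ℝ)/5) * d ^ ((3:ℝ)/5) := Real.mul_rpow (by norm_num) hd0
            _ ≤ 20 * d ^ ((3:ℝ)/5) := by
                apply mul_le_mul_of_nonneg_right _ hdp0
                calc (20:ℝ) ^ ((3:ℝ)/5) ≤ 20 ^ (1:ℝ) :=
                      Real.rpow_le_rpow_of_exponent_le (by norm_num) (by norm_num)
                  _ = 20 := Real.rpow_one 20
        linarith

lemma norm_pt0 (b : ℂ) : ‖pt 0 b‖ = ‖b‖ := by
  rw [norm_pt]
  simp [Real.sqrt_sq (norm_nonneg b)]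

/-- The parametrization `t ↦ (t², t⁵)` of `C = {y² = x⁵}`. -/
noncomputable def par5 (t : ℂ) : EuclideanSpace ℂ (Fin 2) := pt (t ^ 2) (t ^ 5)

/-- The parametrization `t ↦ (t², t³)` of `C̃ = {y² = x³}`. -/
noncomputable def par3 (t : ℂ) : EuclideanSpace ℂ (Fin 2) := pt (t ^ 2) (t ^ 3)

/-- The homeomorphism `φ(t², t⁵) = (t², t³)` from the cusp `y² = x⁵` to `y² = x³`
is `(3/5)`-Hölder near `0` but not Lipschitz on any neighborhood of `0`. -/
theorem phi_holder_not_lipschitz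
    (φ : EuclideanSpace ℂ (Fin 2) → EuclideanSpace ℂ (Fin 2))
    (hφ : ∀ t : ℂ, φ (par5 t) = par3 t) :
    (∃ ε > (0:ℝ), ∃ K > (0:ℝ), ∀ p ∈ Set.range par5 ∩ ball 0 ε,
        ∀ q ∈ Set.range par5 ∩ ball 0 ε, ‖φ p - φ q‖ ≤ K * ‖p - q‖ ^ ((3:ℝ)/5)) ∧
    ∀ ε > (0:ℝ), ¬ ∃ K > (0:ℝ), ∀ p ∈ Set.range par5 ∩ ball 0 ε,
        ∀ q ∈ Set.range par5 ∩ ball 0 ε, ‖φ p - φ q‖ ≤ K * ‖p - q‖ := by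
  constructor
  · -- Hölder
    refine ⟨1/2, by norm_num, 41, by norm_num, ?_⟩
    rintro p ⟨⟨s, rfl⟩, hps⟩ q ⟨⟨t, rfl⟩, hqt⟩
    rw [mem_ball, dist_zero_right] at hps hqt
    have hns : ‖s‖ ≤ 1 := by
      have h1 : ‖s^2‖ ≤ ‖par5 s‖ := fst_le _ _
      rw [norm_pow] at h1
      nlinarith [norm_nonneg s]
    have hnt : ‖t‖ ≤ 1 := by
      have h1 : ‖t^2‖ ≤ ‖par5 t‖ := fst_le _ _
      rw [norm_pow] at h1
      nlinarith [norm_nonneg t]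
    have hsub : par5 s - par5 t = pt (s^2 - t^2) (s^5 - t^5) := by
      rw [par5, par5, pt_sub]
    have hd1 : ‖par5 s - par5 t‖ ≤ 1 := by
      have := norm_sub_le (par5 s) (par5 t)
      linarith
    have h2 : ‖s^2 - t^2‖ ≤ ‖par5 s - par5 t‖ := by
      rw [hsub]; exact fst_le _ _
    have h5 : ‖s^5 - t^5‖ ≤ ‖par5 s - par5 t‖ := by
      rw [hsub]; exact snd_le _ _
    rw [hφ s, hφ t]
    calc ‖par3 s - par3 t‖ ≤ ‖s^2 - t^2‖ + ‖s^3 - t^3‖ := by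
          rw [par3, par3, pt_sub]; exact norm_pt_le _ _
      _ ≤ 41 * ‖par5 s - par5 t‖ ^ ((3:ℝ)/5) := core s t hns hnt hd1 h2 h5
  · -- not Lipschitz
    rintro ε hε ⟨K, hK, hle⟩
    set δ : ℝ := min 1 (min (Real.sqrt (ε/4)) (Real.sqrt (1/(2*K)))) with hδdef
    have hδ0 : 0 < δ := by
      apply lt_min (by norm_num)
      exact lt_min (Real.sqrt_pos.mpr (by linarith)) (Real.sqrt_pos.mpr (by positivity))
    have hδ1 : δ ≤ 1 := min_le_left _ _
    have hδε : δ^2 ≤ ε/4 := by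
      have h : δ ≤ Real.sqrt (ε/4) := le_trans (min_le_right _ _) (min_le_left _ _)
      calc δ^2 ≤ Real.sqrt (ε/4) ^ 2 := pow_le_pow_left₀ hδ0.le h 2
        _ = ε/4 := Real.sq_sqrt (by linarith)
    have hδK : δ^2 ≤ 1/(2*K) := by
      have h : δ ≤ Real.sqrt (1/(2*K)) := le_trans (min_le_right _ _) (min_le_right _ _)
      calc δ^2 ≤ Real.sqrt (1/(2*K)) ^ 2 := pow_le_pow_left₀ hδ0.le h 2
        _ = 1/(2*K) := Real.sq_sqrt (by positivity)
    have hmem : ∀ u : ℂ, ‖u‖ = δ → par5 u ∈ Set.range par5 ∩ ball 0 ε := by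
      intro u hu
      refine ⟨⟨u, rfl⟩, ?_⟩
      rw [mem_ball, dist_zero_right]
      calc ‖par5 u‖ ≤ ‖u^2‖ + ‖u^5‖ := norm_pt_le _ _
        _ = δ^2 + δ^5 := by rw [norm_pow, norm_pow, hu]
        _ ≤ 2 * δ^2 := by nlinarith [pow_pos hδ0 2, pow_pos hδ0 5, pow_le_pow_of_le_one hδ0.le hδ1 (show 2 ≤ 5 by norm_num)]
        _ ≤ ε/2 := by linarith
        _ < ε := by linarith
    have hnd : ‖(δ:ℂ)‖ = δ := by
      rw [Complex.norm_real, Real.norm_of_nonneg hδ0.le]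
    have hnd' : ‖(-(δ:ℂ))‖ = δ := by rw [norm_neg]; exact hnd
    have key := hle (par5 δ) (hmem _ hnd) (par5 (-(δ:ℂ))) (hmem _ hnd')
    rw [hφ, hφ] at key
    have e1 : par3 (δ:ℂ) - par3 (-(δ:ℂ)) = pt 0 (((2*δ^3 : ℝ) : ℂ)) := by
      rw [par3, par3, pt_sub]
      congr 1 <;> push_cast <;> ring
    have e2 : par5 (δ:ℂ) - par5 (-(δ:ℂ)) = pt 0 (((2*δ^5 : ℝ) : ℂ)) := by
      rw [par5, par5, pt_sub]
      congr 1 <;> push_cast <;> ring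
    rw [e1, e2, norm_pt0, norm_pt0, Complex.norm_real, Complex.norm_real,
      Real.norm_of_nonneg (by positivity), Real.norm_of_nonneg (by positivity)] at key
    -- key : 2*δ^3 ≤ K * (2*δ^5)
    have hKδ : K * δ^2 ≤ 1/2 := by
      have h := mul_le_mul_of_nonneg_left hδK hK.le
      have h2 : K * (1/(2*K)) = 1/2 := by
        rw [mul_one_div, div_eq_div_iff (by positivity) (by norm_num)]
        ring
      linarith
    nlinarith [pow_pos hδ0 3, pow_pos hδ0 5, pow_pos hδ0 2]
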